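/- Let {T(t)}_{t≥0} be a c₀ α-fractional semigroup on a Banach space X (0 < α ≤ 1) with α-infinitesimal generator A, and suppose t ↦ T(t) is continuously α-differentiable. Then for every x ∈ D(A) and t > 0, T^{(α)}(t)x = T(t)Ax = AT(t)x. -/

import Mathlib

open Filter Topology Set Real

/-- Vector-valued conformable fractional derivative of order `α` at `t`. -/
def HasConfDerivAt {X : Type*} [NormedAddCommGroup X] [NormedSpace ℝ X]
    (α : ℝ) (f : ℝ → X) (t : ℝ) (L : X) : Prop :=
  Filter.Tendsto (fun ε : ℝ => (ε : ℝ)⁻¹ • (f (t + ε * t ^ (1 - α)) - f t)) (𝓝[≠] 0) (𝓝 L)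

lemma conf_to_deriv {X : Type*} [NormedAddCommGroup X] [NormedSpace ℝ X]
    {α : ℝ} {f : ℝ → X} {t : ℝ} (ht : 0 < t) {L : X}
    (h : HasConfDerivAt α f t L) : HasDerivAt f (t ^ (α - 1) • L) t := by
  set c : ℝ := t ^ (1 - α) with hc
  have hcpos : 0 < c := Real.rpow_pos_of_pos ht _
  rw [hasDerivAt_iff_tendsto_slope_zero]
  have h1 : Tendsto (fun δ : ℝ => δ / c) (𝓝[≠] 0) (𝓝[≠] 0) := by
    rw [tendsto_nhdsWithin_iff]
    constructor
    · have : Tendsto (fun δ : ℝ => δ / c) (𝓝 0) (𝓝 (0 / c)) :=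
        (continuous_id.div_const c).tendsto 0
      simpa using this.mono_left nhdsWithin_le_nhds
    · filter_upwards [self_mem_nhdsWithin] with δ hδ
      simp only [mem_compl_iff, mem_singleton_iff] at hδ ⊢
      exact div_ne_zero hδ hcpos.ne'
  have h2 := (h.comp h1).const_smul (c⁻¹)
  have heq : ((fun ε : ℝ => c⁻¹ • (ε⁻¹ • (f (t + ε * c) - f t))) ∘ (fun δ : ℝ => δ / c))
      = fun δ : ℝ => δ⁻¹ • (f (t + δ) - f t) := by
    funext δ
    have hd : δ / c * c = δ := div_mul_cancel₀ δ hcpos.ne'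
    simp only [Function.comp_apply, hd, smul_smul]
    congr 1
    rw [div_eq_mul_inv, mul_inv, inv_inv, mul_comm (δ⁻¹) c, ← mul_assoc,
      inv_mul_cancel₀ hcpos.ne', one_mul]
  have h2' : Tendsto ((fun ε : ℝ => c⁻¹ • (ε⁻¹ • (f (t + ε * c) - f t))) ∘ (fun δ : ℝ => δ / c))
      (𝓝[≠] 0) (𝓝 (c⁻¹ • L)) := by
    exact Tendsto.comp (h.const_smul c⁻¹) h1
  rw [heq] at h2'
  have hcinv : c⁻¹ = t ^ (α - 1) := by
    rw [hc, ← Real.rpow_neg ht.le]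
    ring_nf
  rwa [hcinv] at h2'

/-- For a continuously α-differentiable c₀ α-fractional semigroup `T` with pointwise
conformable derivative `T'` and `x` in the domain of the generator with `A x = Ax`,
one has `T^{(α)}(t) x = T(t) Ax = A T(t) x` (the last equality expressed by saying that
`T(t)x` lies in the domain of the generator with value `T^{(α)}(t)x`). -/
theorem conf_semigroup_deriv_commutes
    {X : Type*} [NormedAddCommGroup X] [NormedSpace ℝ X] [CompleteSpace X]
    (α : ℝ) (hα : α ∈ Set.Ioc (0:ℝ) 1)
    (T : ℝ → (X →L[ℝ] X)) (T' : ℝ → X → X)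
    (hT0 : T 0 = 1)
    (hlaw : ∀ s ≥ (0:ℝ), ∀ t ≥ (0:ℝ),
      T ((s + t) ^ (1 / α)) = T (s ^ (1 / α)) ∘L T (t ^ (1 / α)))
    (hc0 : ∀ x : X, Filter.Tendsto (fun t => T t x) (𝓝[>] 0) (𝓝 x))
    (hderiv : ∀ t > (0:ℝ), ∀ x : X, HasConfDerivAt α (fun τ => T τ x) t (T' t x))
    (hcont : ∀ x : X, ContinuousOn (fun t => T' t x) (Set.Ioi 0))
    (x Ax : X)
    (hgen : Filter.Tendsto (fun t => T' t x) (𝓝[>] 0) (𝓝 Ax))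
    (t : ℝ) (ht : 0 < t) :
    T' t x = T t Ax ∧
    Filter.Tendsto (fun s => T' s (T t x)) (𝓝[>] 0) (𝓝 (T' t x)) := by
  have hα0 : 0 < α := hα.1
  set φ : ℝ → ℝ := fun s => (t ^ α + s ^ α) ^ (1 / α) with hφdef
  have htα : 0 < t ^ α := Real.rpow_pos_of_pos ht α
  have hφpos : ∀ s : ℝ, 0 < s → 0 < φ s := fun s hs =>
    Real.rpow_pos_of_pos (by positivity) _
  have hroot : ∀ u : ℝ, 0 < u → (u ^ α) ^ (1/α) = u := by
    intro u hu
    rw [← Real.rpow_mul hu.le, mul_one_div, div_self hα0.ne', Real.rpow_one]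
  -- semigroup identity in two forms
  have hsg : ∀ s : ℝ, 0 < s → T (φ s) = T t ∘L T s := by
    intro s hs
    have h1 := hlaw (t ^ α) htα.le (s ^ α) (Real.rpow_pos_of_pos hs α).le
    rwa [hroot t ht, hroot s hs] at h1
  have hsg' : ∀ s : ℝ, 0 < s → T (φ s) = T s ∘L T t := by
    intro s hs
    have h1 := hlaw (s ^ α) (Real.rpow_pos_of_pos hs α).le (t ^ α) htα.le
    rw [hroot t ht, hroot s hs] at h1
    rw [hφdef]
    simp only []
    rw [add_comm (t ^ α) (s ^ α)]
    exact h1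
  -- key pointwise identities
  have key : ∀ s : ℝ, 0 < s →
      T' (φ s) x = T t (T' s x) ∧ T' (φ s) x = T' s (T t x) := by
    intro s hs
    have hφs : 0 < φ s := hφpos s hs
    -- derivative of φ at s
    have hinner : HasDerivAt (fun u : ℝ => t ^ α + u ^ α) (α * s ^ (α - 1)) s := by
      have := (Real.hasDerivAt_rpow_const (x := s) (p := α) (Or.inl hs.ne'))
      simpa using (this.const_add (t ^ α))
    have houter : HasDerivAt (fun u : ℝ => u ^ (1/α))
        ((1/α) * (t ^ α + s ^ α) ^ (1/α - 1)) (t ^ α + s ^ α) := by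
      have := (Real.hasDerivAt_rpow_const (x := t ^ α + s ^ α) (p := 1/α)
        (Or.inl (by positivity)))
      simpa [mul_comm] using this
    have hφd : HasDerivAt φ ((1/α) * (t ^ α + s ^ α) ^ (1/α - 1) * (α * s ^ (α - 1))) s :=
      by have := houter.comp s hinner; exact this
    -- derivative of s ↦ T (φ s) x
    have hTφ : HasDerivAt (fun u => T (φ u) x)
        (((1/α) * (t ^ α + s ^ α) ^ (1/α - 1) * (α * s ^ (α - 1))) •
          ((φ s) ^ (α - 1) • T' (φ s) x)) s :=
      HasDerivAt.scomp s (conf_to_deriv hφs (hderiv (φ s) hφs x)) hφd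
    -- simplify scalar
    have hscal : ((1/α) * (t ^ α + s ^ α) ^ (1/α - 1) * (α * s ^ (α - 1))) * (φ s) ^ (α - 1)
        = s ^ (α - 1) := by
      have hb : (0:ℝ) < t ^ α + s ^ α := by positivity
      have h1 : (φ s) ^ (α - 1) = (t ^ α + s ^ α) ^ ((α - 1)/α) := by
        rw [hφdef]
        simp only []
        rw [← Real.rpow_mul hb.le]
        congr 1
        field_simp
      have h2 : (t ^ α + s ^ α) ^ (1/α - 1) * (t ^ α + s ^ α) ^ ((α - 1)/α) = 1 := by
        rw [← Real.rpow_add hb, show 1/α - 1 + (α - 1)/α = 0 by field_simp; ring, Real.rpow_zero]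
      calc (1/α) * (t ^ α + s ^ α) ^ (1/α - 1) * (α * s ^ (α - 1)) * (φ s) ^ (α - 1)
          = (1/α*α) * ((t ^ α + s ^ α) ^ (1/α - 1) * (t ^ α + s ^ α) ^ ((α - 1)/α))
            * s ^ (α - 1) := by rw [h1]; ring
        _ = s ^ (α - 1) := by rw [h2, one_div_mul_cancel hα0.ne']; ring
    have hTφ' : HasDerivAt (fun u => T (φ u) x) (s ^ (α - 1) • T' (φ s) x) s := by
      have := hTφ
      rwa [smul_smul, hscal] at this
    -- the two other functions, eventually equal to u ↦ T (φ u) x near s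
    have hmem : Ioi (0:ℝ) ∈ 𝓝 s := (isOpen_Ioi).mem_nhds hs
    have heq1 : (fun u => T t (T u x)) =ᶠ[𝓝 s] (fun u => T (φ u) x) := by
      filter_upwards [hmem] with u hu
      rw [hsg u hu]; rfl
    have heq2 : (fun u => T u (T t x)) =ᶠ[𝓝 s] (fun u => T (φ u) x) := by
      filter_upwards [hmem] with u hu
      rw [hsg' u hu]; rfl
    have hd1 : HasDerivAt (fun u => T t (T u x)) (s ^ (α - 1) • T' (φ s) x) s :=
      hTφ'.congr_of_eventuallyEq heq1
    have hd2 : HasDerivAt (fun u => T u (T t x)) (s ^ (α - 1) • T' (φ s) x) s :=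
      hTφ'.congr_of_eventuallyEq heq2
    -- direct derivatives of those functions
    have hd1' : HasDerivAt (fun u => T t (T u x)) (T t (s ^ (α - 1) • T' s x)) s :=
      (T t).hasFDerivAt.comp_hasDerivAt s (conf_to_deriv hs (hderiv s hs x))
    have hd2' : HasDerivAt (fun u => T u (T t x)) (s ^ (α - 1) • T' s (T t x)) s :=
      conf_to_deriv hs (hderiv s hs (T t x))
    have hsne : (s : ℝ) ^ (α - 1) ≠ 0 := (Real.rpow_pos_of_pos hs _).ne'
    constructor
    · have := hd1.unique hd1'
      rw [map_smul] at this
      exact smul_right_injective X hsne this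
    · have := hd2.unique hd2'
      exact smul_right_injective X hsne this
  -- limit of φ as s → 0⁺
  have hφtendsto : Tendsto φ (𝓝[>] 0) (𝓝[Ioi 0] t) := by
    rw [tendsto_nhdsWithin_iff]
    constructor
    · have h1 : Tendsto (fun s : ℝ => s ^ α) (𝓝[>] 0) (𝓝 0) := by
        have : ContinuousAt (fun s : ℝ => s ^ α) 0 :=
          Real.continuousAt_rpow_const 0 α (Or.inr hα0.le)
        have h : Tendsto (fun s : ℝ => s ^ α) (𝓝[>] 0) (𝓝 ((0:ℝ) ^ α)) :=
          this.tendsto.mono_left nhdsWithin_le_nhds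
        simpa [Real.zero_rpow hα0.ne'] using h
      have h2 : Tendsto (fun s : ℝ => t ^ α + s ^ α) (𝓝[>] 0) (𝓝 (t ^ α)) := by
        simpa using (tendsto_const_nhds.add h1)
      have h3 : ContinuousAt (fun u : ℝ => u ^ (1/α)) (t ^ α) :=
        Real.continuousAt_rpow_const _ _ (Or.inl htα.ne')
      have h4 := h3.tendsto.comp h2
      rw [hroot t ht] at h4
      exact h4
    · filter_upwards [self_mem_nhdsWithin] with s hs
      exact hφpos s hs
  -- limits
  have lim1 : Tendsto (fun s => T' (φ s) x) (𝓝[>] 0) (𝓝 (T' t x)) :=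
    ((hcont x) t ht).tendsto.comp hφtendsto
  have lim2 : Tendsto (fun s => T t (T' s x)) (𝓝[>] 0) (𝓝 (T t Ax)) :=
    ((T t).continuous.tendsto _).comp hgen
  have ev1 : (fun s => T' (φ s) x) =ᶠ[𝓝[>] (0:ℝ)] (fun s => T t (T' s x)) := by
    filter_upwards [self_mem_nhdsWithin] with s hs
    exact (key s hs).1
  have ev2 : (fun s => T' (φ s) x) =ᶠ[𝓝[>] (0:ℝ)] (fun s => T' s (T t x)) := by
    filter_upwards [self_mem_nhdsWithin] with s hs
    exact (key s hs).2
  constructor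
  · exact tendsto_nhds_unique (lim1.congr' ev1) lim2
  · exact lim1.congr' ev2
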